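/- For all integers n ≥ r ≥ d ≥ 2 with r ≥ (1 − 1/d)·n, u(n, r, d) = 2^{n − (n−r)d}·(2^d − 1)^{n − r}; that is, the maximum cardinality of a family of subsets of [n] not having property U(r+1, d) equals 2^{n − (n−r)d}·(2^d − 1)^{n − r}. -/

import Mathlib

/-- `F` shatters `I` : the trace of `F` on `I` has full size `2^|I|`. -/
def Shatters {n : ℕ} (F : Finset (Finset (Fin n))) (I : Finset (Fin n)) : Prop :=
  (F.image fun A => A ∩ I).card = 2 ^ I.card

/-- `I` is `d`-universal for `F`. -/
def DUniversal {n : ℕ} (F : Finset (Finset (Fin n))) (d : ℕ) (I : Finset (Fin n)) : Prop :=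
  d ≤ I.card ∧ ∀ J ⊆ I, J.card = d → Shatters F J

/-- `F` has property `U(r, d)` : there is a `d`-universal set of size `r`. -/
def HasU {n : ℕ} (F : Finset (Finset (Fin n))) (r d : ℕ) : Prop :=
  ∃ I : Finset (Fin n), I.card = r ∧ DUniversal F d I

/-- `u n r d` : the maximum cardinality of a family of subsets of `[n]`
not having property `U(r+1, d)`. -/
noncomputable def uMax (n r d : ℕ) : ℕ :=
  sSup {m | ∃ F : Finset (Finset (Fin n)), ¬ HasU F (r + 1) d ∧ F.card = m}


namespace UAux

open Finset FinsetFamily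



variable {α : Type*} [DecidableEq α]

lemma main_count (d : ℕ) :
    ∀ (k : ℕ) (V : Finset α) (N : Finset (Finset α)) (P : Finset (Finset α)),
      (∀ f ∈ N, f ⊆ V ∧ f.card ≤ d) →
      (∀ C : Finset α, C.card < k → ∃ f ∈ N, f ∩ C = ∅) →
      (∀ S ∈ P, S ⊆ V ∧ ∀ f ∈ N, ¬ f ⊆ S) →
      P.card * 2 ^ (k * d) ≤ 2 ^ V.card * (2 ^ d - 1) ^ k := by
  intro k
  induction k with
  | zero =>
    intro V N P _ _ hP
    have : P ⊆ V.powerset := fun S hS => mem_powerset.2 (hP S hS).1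
    simpa using (card_le_card this).trans_eq (card_powerset V)
  | succ k ih =>
    intro V N P hN hτ hP
    by_cases h0 : ∅ ∈ N
    · have hemp : P = ∅ := eq_empty_of_forall_notMem fun S hS =>
        (hP S hS).2 ∅ h0 (empty_subset S)
      simp [hemp]
    · -- inner induction on the size of a chosen edge
      have inner : ∀ (m : ℕ) (V : Finset α) (N : Finset (Finset α)) (P : Finset (Finset α))
          (e : Finset α),
          e ∈ N → e.card = m → 0 < m →
          (∀ f ∈ N, f ⊆ V ∧ f.card ≤ d) →
          (∀ C : Finset α, C.card < k + 1 → ∃ f ∈ N, f ∩ C = ∅) →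
          (∀ S ∈ P, S ⊆ V ∧ ∀ f ∈ N, ¬ f ⊆ S) →
          P.card * 2 ^ (k * d) * 2 ^ m
            ≤ 2 ^ V.card * (2 ^ m - 1) * (2 ^ d - 1) ^ k := by
        intro m
        induction m with
        | zero => intro V N P e _ _ h; omega
        | succ m' ihm =>
          intro V N P e he hecard _ hN hτ hP
          have hene : e.Nonempty := card_pos.1 (by omega)
          obtain ⟨v, hv⟩ := hene
          have hvV : v ∈ V := (hN e he).1 hv
          set N₀ : Finset (Finset α) := N.filter (fun f => v ∉ f) with hN₀def
          set N₁ : Finset (Finset α) := N.image (fun f => f.erase v) with hN₁def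
          set P₀ : Finset (Finset α) := P.filter (fun S => v ∉ S) with hP₀def
          set P₁ : Finset (Finset α) := (P.filter (fun S => v ∈ S)).image
            (fun S => S.erase v) with hP₁def
          -- bound for the v ∉ S branch
          have hb₀ : P₀.card * 2 ^ (k * d) ≤ 2 ^ (V.erase v).card * (2 ^ d - 1) ^ k := by
            refine ih (V.erase v) N₀ P₀ ?_ ?_ ?_
            · intro f hf
              rw [hN₀def, mem_filter] at hf
              exact ⟨subset_erase.2 ⟨(hN f hf.1).1, hf.2⟩, (hN f hf.1).2⟩
            · intro C hC
              obtain ⟨f, hf, hfC⟩ := hτ (insert v C) (by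
                calc (insert v C).card ≤ C.card + 1 := card_insert_le _ _
                _ < k + 1 := by omega)
              have hvf : v ∉ f := by
                intro hvf
                have : v ∈ f ∩ insert v C := mem_inter.2 ⟨hvf, mem_insert_self _ _⟩
                rw [hfC] at this; exact notMem_empty _ this
              refine ⟨f, by rw [hN₀def, mem_filter]; exact ⟨hf, hvf⟩, subset_empty.1 ?_⟩
              rw [← hfC]
              exact inter_subset_inter (Subset.refl _) (subset_insert _ _)
            · intro S hS
              rw [hP₀def, mem_filter] at hS
              refine ⟨subset_erase.2 ⟨(hP S hS.1).1, hS.2⟩, fun f hf => ?_⟩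
              rw [hN₀def, mem_filter] at hf
              exact (hP S hS.1).2 f hf.1
          -- bound for the v ∈ S branch
          have he' : e.erase v ∈ N₁ := mem_image_of_mem _ he
          have he'card : (e.erase v).card = m' := by
            rw [card_erase_of_mem hv, hecard]
            omega
          have hN₁sub : ∀ g ∈ N₁, g ⊆ V.erase v ∧ g.card ≤ d := by
            intro g hg
            rw [hN₁def, mem_image] at hg
            obtain ⟨f, hf, rfl⟩ := hg
            exact ⟨erase_subset_erase v (hN f hf).1,
              le_trans (card_le_card (erase_subset _ _)) (hN f hf).2⟩
          have hN₁τ : ∀ C : Finset α, C.card < k + 1 → ∃ g ∈ N₁, g ∩ C = ∅ := by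
            intro C hC
            obtain ⟨f, hf, hfC⟩ := hτ C hC
            refine ⟨f.erase v, mem_image_of_mem _ hf, subset_empty.1 ?_⟩
            rw [← hfC]
            exact inter_subset_inter (erase_subset _ _) (Subset.refl _)
          have hP₁ : ∀ S' ∈ P₁, S' ⊆ V.erase v ∧ ∀ g ∈ N₁, ¬ g ⊆ S' := by
            intro S' hS'
            rw [hP₁def, mem_image] at hS'
            obtain ⟨S, hS, rfl⟩ := hS'
            rw [mem_filter] at hS
            refine ⟨erase_subset_erase v (hP S hS.1).1, fun g hg hgS => ?_⟩
            rw [hN₁def, mem_image] at hg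
            obtain ⟨f, hf, rfl⟩ := hg
            refine (hP S hS.1).2 f hf ?_
            intro x hx
            rcases eq_or_ne x v with rfl | hxv
            · exact hS.2
            · have : x ∈ S.erase v := hgS (mem_erase.2 ⟨hxv, hx⟩)
              exact (mem_erase.1 this).2
          have hb₁ : P₁.card * 2 ^ (k * d) * 2 ^ m'
              ≤ 2 ^ (V.erase v).card * (2 ^ m' - 1) * (2 ^ d - 1) ^ k := by
            rcases Nat.eq_zero_or_pos m' with hm0 | hm0
            · subst hm0
              have hee : e.erase v = ∅ := card_eq_zero.1 he'card
              rw [hee] at he'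
              have hemp1 : P₁ = ∅ := eq_empty_of_forall_notMem fun S' hS' =>
                (hP₁ S' hS').2 ∅ he' (empty_subset S')
              simp [hemp1]
            · exact ihm (V.erase v) N₁ P₁ (e.erase v) he' he'card hm0 hN₁sub hN₁τ hP₁
          -- split the count
          have hsplit : (P.filter fun S => v ∈ S).card + (P.filter fun S => v ∉ S).card
              = P.card := card_filter_add_card_filter_not (fun S => v ∈ S)
          have hP₁card : P₁.card = (P.filter fun S => v ∈ S).card := by
            rw [hP₁def]
            refine card_image_of_injOn ?_
            intro S hS T hT hST
            simp only [coe_filter, Set.mem_setOf_eq] at hS hT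
            have h2 : S.erase v = T.erase v := hST
            rw [← insert_erase hS.2, ← insert_erase hT.2, h2]
          have hPle : P.card ≤ P₀.card + P₁.card := by
            rw [hP₀def, hP₁card]
            omega
          -- arithmetic
          have hVc : V.card = (V.erase v).card + 1 := by
            have hpos : 0 < V.card := card_pos.2 ⟨v, hvV⟩
            rw [card_erase_of_mem hvV]
            omega
          set K := 2 ^ (k * d)
          set W := 2 ^ (V.erase v).card
          set Pk := (2 ^ d - 1) ^ k
          have hx : 1 ≤ 2 ^ m' := Nat.one_le_two_pow
          calc P.card * K * 2 ^ (m' + 1) ≤ (P₀.card + P₁.card) * K * 2 ^ (m' + 1) := by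
                exact Nat.mul_le_mul_right _ (Nat.mul_le_mul_right _ hPle)
            _ = P₀.card * K * 2 ^ (m' + 1) + (P₁.card * K * 2 ^ m') * 2 := by ring
            _ ≤ W * Pk * 2 ^ (m' + 1) + (W * (2 ^ m' - 1) * Pk) * 2 := by
                exact Nat.add_le_add (Nat.mul_le_mul_right _ hb₀) (Nat.mul_le_mul_right _ hb₁)
            _ = 2 ^ V.card * (2 ^ (m' + 1) - 1) * Pk := by
                obtain ⟨y, hy⟩ : ∃ y, 2 ^ m' = y + 1 := ⟨2 ^ m' - 1, by omega⟩
                rw [hVc, pow_succ, pow_succ, hy]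
                have h2 : (y + 1) - 1 = y := by omega
                have h3 : (y + 1) * 2 - 1 = 2 * y + 1 := by omega
                rw [h2, h3]
                ring
      -- apply the inner lemma to an edge from hτ
      obtain ⟨e, he, -⟩ := hτ ∅ (by simp)
      have hene : e ≠ ∅ := fun h => h0 (h ▸ he)
      have hm : 0 < e.card := card_pos.2 (nonempty_iff_ne_empty.2 hene)
      have hmd : e.card ≤ d := (hN e he).2
      have h := inner e.card V N P e he rfl hm hN hτ hP
      have hkey : (2 ^ e.card - 1) * 2 ^ (d - e.card) ≤ 2 ^ d - 1 := by
        have h2 : (2:ℕ) ^ e.card * 2 ^ (d - e.card) = 2 ^ d := by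
          rw [← pow_add]; congr 1; omega
        have h3 : (1:ℕ) ≤ 2 ^ (d - e.card) := Nat.one_le_two_pow
        have h4 : (1:ℕ) ≤ 2 ^ e.card := Nat.one_le_two_pow
        rw [Nat.sub_mul, one_mul, h2]
        omega
      have hsplit2 : (k + 1) * d = k * d + e.card + (d - e.card) := by
        rw [add_mul, one_mul]
        omega
      calc P.card * 2 ^ ((k+1) * d)
          = (P.card * 2 ^ (k * d) * 2 ^ e.card) * 2 ^ (d - e.card) := by
            rw [hsplit2, pow_add, pow_add]
            ring
        _ ≤ (2 ^ V.card * (2 ^ e.card - 1) * (2 ^ d - 1) ^ k) * 2 ^ (d - e.card) :=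
            Nat.mul_le_mul_right _ h
        _ = 2 ^ V.card * ((2 ^ e.card - 1) * 2 ^ (d - e.card)) * (2 ^ d - 1) ^ k := by ring
        _ ≤ 2 ^ V.card * (2 ^ d - 1) * (2 ^ d - 1) ^ k :=
            Nat.mul_le_mul_right _ (Nat.mul_le_mul_left _ hkey)
        _ = 2 ^ V.card * (2 ^ d - 1) ^ (k + 1) := by ring



lemma sum_compression_lt (a : α) (F : Finset (Finset α)) (A : Finset α) (hA : A ∈ F)
    (ha : A.erase a ∉ F) :
    ∑ s ∈ Down.compression a F, s.card < ∑ s ∈ F, s.card := by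
  rw [Down.compression, sum_disjUnion, filter_image]
  have hinj : ∀ x ∈ F.filter fun s => s.erase a ∉ F, ∀ y ∈ F.filter fun s => s.erase a ∉ F,
      x.erase a = y.erase a → x = y := by
    intro x hx y hy hxy
    rw [mem_filter] at hx hy
    have hax : a ∈ x := by
      by_contra h
      exact hx.2 (by rw [erase_eq_of_notMem h]; exact hx.1)
    have hay : a ∈ y := by
      by_contra h
      exact hy.2 (by rw [erase_eq_of_notMem h]; exact hy.1)
    rw [← insert_erase hax, ← insert_erase hay, hxy]
  rw [sum_image hinj]
  have hQne : (F.filter fun s => s.erase a ∉ F).Nonempty := ⟨A, mem_filter.2 ⟨hA, ha⟩⟩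
  have hkey : ∑ s ∈ F.filter (fun s => s.erase a ∉ F), (s.erase a).card
      < ∑ s ∈ F.filter (fun s => s.erase a ∉ F), s.card := by
    refine sum_lt_sum_of_nonempty hQne ?_
    intro s hs
    rw [mem_filter] at hs
    have has : a ∈ s := by
      by_contra h
      exact hs.2 (by rw [erase_eq_of_notMem h]; exact hs.1)
    rw [card_erase_of_mem has]
    have : 0 < s.card := card_pos.2 ⟨a, has⟩
    omega
  calc ∑ s ∈ F.filter (fun s => s.erase a ∈ F), s.card
        + ∑ s ∈ F.filter (fun s => s.erase a ∉ F), (s.erase a).card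
      < ∑ s ∈ F.filter (fun s => s.erase a ∈ F), s.card
        + ∑ s ∈ F.filter (fun s => s.erase a ∉ F), s.card := by omega
    _ = ∑ s ∈ F, s.card := sum_filter_add_sum_filter_not _ _ _

/-- every family can be compressed to an erase-closed family of the same size,
shattering fewer sets -/
lemma exists_compressed : ∀ (μ : ℕ) (F : Finset (Finset α)), (∑ A ∈ F, A.card) ≤ μ →
    ∃ G : Finset (Finset α), G.card = F.card ∧
      (∀ s, G.Shatters s → F.Shatters s) ∧
      (∀ A ∈ G, ∀ a, A.erase a ∈ G) := by
  intro μ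
  induction μ with
  | zero =>
    intro F hF
    refine ⟨F, rfl, fun s h => h, ?_⟩
    intro A hA a
    have hA0 : A.card = 0 := by
      have := Finset.single_le_sum (f := fun s : Finset α => s.card) (fun i _ => Nat.zero_le _) hA
      beta_reduce at this
      omega
    rw [card_eq_zero] at hA0
    subst hA0
    simpa using hA
  | succ μ ihμ =>
    intro F hF
    by_cases hcl : ∀ A ∈ F, ∀ a, A.erase a ∈ F
    · exact ⟨F, rfl, fun s h => h, hcl⟩
    · push_neg at hcl
      obtain ⟨A, hA, a, ha⟩ := hcl
      have hlt := sum_compression_lt a F A hA ha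
      obtain ⟨G, hG1, hG2, hG3⟩ := ihμ (Down.compression a F) (by omega)
      exact ⟨G, hG1.trans (Down.card_compression a F), fun s hs =>
        (hG2 s hs).of_compression, hG3⟩

/-- erase-closed families are downward closed -/
lemma downward_closed (G : Finset (Finset α)) (hG : ∀ A ∈ G, ∀ a, A.erase a ∈ G) :
    ∀ (m : ℕ) (A : Finset α), A ∈ G → A.card ≤ m → ∀ B ⊆ A, B ∈ G := by
  intro m
  induction m with
  | zero =>
    intro A hA hcard B hB
    have : A = ∅ := card_eq_zero.1 (by omega)
    subst this
    rwa [subset_empty.1 hB]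
  | succ m ihm =>
    intro A hA hcard B hB
    rcases eq_or_ne B A with rfl | hne
    · exact hA
    · have hss : B ⊂ A := Finset.ssubset_iff_subset_ne.2 ⟨hB, hne⟩
      obtain ⟨x, hxA, hxB⟩ := exists_of_ssubset hss
      refine ihm (A.erase x) (hG A hA x) ?_ B (subset_erase.2 ⟨hB, hxB⟩)
      rw [card_erase_of_mem hxA]
      omega



lemma count_blocks (d : ℕ) : ∀ (l : ℕ) (V : Finset α) (Bs : ℕ → Finset α),
    (∀ i, i < l → Bs i ⊆ V ∧ (Bs i).card = d) →
    (∀ i j, i < l → j < l → i ≠ j → Disjoint (Bs i) (Bs j)) →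
    l * d ≤ V.card ∧
    (V.powerset.filter fun A => ∀ i, i < l → ¬ Bs i ⊆ A).card
      = 2 ^ (V.card - l * d) * (2 ^ d - 1) ^ l := by
  intro l
  induction l with
  | zero =>
    intro V Bs _ _
    refine ⟨by omega, ?_⟩
    rw [filter_true_of_mem (fun A _ => by omega), card_powerset]
    simp
  | succ l ihl =>
    intro V Bs hBs hdisj
    set B := Bs l with hBdef
    have hBV : B ⊆ V := (hBs l (by omega)).1
    have hBcard : B.card = d := (hBs l (by omega)).2
    set V' := V \ B with hV'def
    have hV'card : V'.card = V.card - d := by rw [hV'def, card_sdiff_of_subset hBV, hBcard]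
    obtain ⟨hld, hcount⟩ := ihl V' Bs
      (fun i hi => ⟨subset_sdiff.2 ⟨(hBs i (by omega)).1, hdisj i l (by omega) (by omega) (by omega)⟩,
        (hBs i (by omega)).2⟩)
      (fun i j hi hj hij => hdisj i j (by omega) (by omega) hij)
    have hcard_bij :
        (V.powerset.filter fun A => ∀ i, i < l + 1 → ¬ Bs i ⊆ A).card
        = ((B.powerset.erase B) ×ˢ (V'.powerset.filter fun A => ∀ i, i < l → ¬ Bs i ⊆ A)).card := by
      refine card_bij' (fun A _ => (A ∩ B, A \ B)) (fun p _ => p.1 ∪ p.2) ?_ ?_ ?_ ?_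
      · intro A hA
        rw [mem_filter, mem_powerset] at hA
        rw [mem_product]
        constructor
        · rw [mem_erase, mem_powerset]
          exact ⟨fun h => hA.2 l (by omega) (inter_eq_right.1 h), inter_subset_right⟩
        · rw [mem_filter, mem_powerset]
          refine ⟨sdiff_subset_sdiff hA.1 (Subset.refl _), fun i hi hsub => ?_⟩
          exact hA.2 i (by omega) (hsub.trans sdiff_subset)
      · intro p hp
        rw [mem_product, mem_erase, mem_powerset, mem_filter, mem_powerset] at hp
        obtain ⟨⟨hp1ne, hp1⟩, hp2, hp3⟩ := hp
        rw [mem_filter, mem_powerset]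
        have hp2V : p.2 ⊆ V := hp2.trans sdiff_subset
        have hp2B : Disjoint p.2 B := (subset_sdiff.1 hp2).2
        refine ⟨union_subset (hp1.trans hBV) hp2V, fun i hi hsub => ?_⟩
        rcases Nat.lt_or_ge i l with hil | hil
        · refine hp3 i hil (fun x hx => ?_)
          rcases mem_union.1 (hsub hx) with hxT | hxA
          · exact absurd (hp1 hxT)
              (disjoint_left.1 (hdisj i l (by omega) (by omega) (by omega)) hx)
          · exact hxA
        · have hieq : i = l := by omega
          subst hieq
          refine hp1ne (Subset.antisymm hp1 fun x hxB => ?_)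
          rcases mem_union.1 (hsub hxB) with hxT | hxA
          · exact hxT
          · exact absurd hxB (disjoint_left.1 hp2B hxA)
      · intro A _
        ext x
        simp only [mem_union, mem_inter, mem_sdiff]
        tauto
      · intro p hp
        rw [mem_product, mem_erase, mem_powerset, mem_filter, mem_powerset] at hp
        obtain ⟨⟨hp1ne, hp1⟩, hp2, -⟩ := hp
        have hp2B : Disjoint p.2 B := (subset_sdiff.1 hp2).2
        have h1 : (p.1 ∪ p.2) ∩ B = p.1 := by
          ext x
          simp only [mem_inter, mem_union]
          constructor
          · rintro ⟨hx1 | hx2, hxB⟩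
            · exact hx1
            · exact absurd hxB (disjoint_left.1 hp2B hx2)
          · intro hx
            exact ⟨Or.inl hx, hp1 hx⟩
        have h2 : (p.1 ∪ p.2) \ B = p.2 := by
          ext x
          simp only [mem_sdiff, mem_union]
          constructor
          · rintro ⟨hx1 | hx2, hxB⟩
            · exact absurd (hp1 hx1) hxB
            · exact hx2
          · intro hx
            exact ⟨Or.inr hx, disjoint_left.1 hp2B hx⟩
        beta_reduce
        rw [h1, h2]
    have hBpow : B ∈ B.powerset := mem_powerset.2 (Subset.refl _)
    have hdV : d ≤ V.card := by
      have := card_le_card hBV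
      omega
    constructor
    · rw [add_mul, one_mul]
      omega
    · rw [hcard_bij, card_product, card_erase_of_mem hBpow, card_powerset, hBcard, hcount,
        hV'card]
      have hexp : V.card - d - l * d = V.card - (l + 1) * d := by
        rw [add_mul, one_mul]
        omega
      rw [hexp, pow_succ]
      ring


lemma myShatters_iff {n : ℕ} (F : Finset (Finset (Fin n))) (I : Finset (Fin n)) :
    _root_.Shatters F I ↔ Finset.Shatters F I := by
  unfold _root_.Shatters
  constructor
  · intro h t ht
    have hsub : F.image (fun A => A ∩ I) ⊆ I.powerset := by
      intro x hx
      obtain ⟨A, -, rfl⟩ := mem_image.1 hx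
      exact mem_powerset.2 inter_subset_right
    have heq : F.image (fun A => A ∩ I) = I.powerset :=
      eq_of_subset_of_card_le hsub (by rw [h, card_powerset])
    have ht' : t ∈ F.image (fun A => A ∩ I) := heq ▸ mem_powerset.2 ht
    obtain ⟨A, hA, hAt⟩ := mem_image.1 ht'
    exact ⟨A, hA, by rw [inter_comm]; exact hAt⟩
  · intro h
    have h1 : I.powerset ⊆ F.image (fun A => A ∩ I) := by
      intro t ht
      obtain ⟨u, hu, hut⟩ := h (mem_powerset.1 ht)
      exact mem_image.2 ⟨u, hu, by rw [inter_comm]; exact hut⟩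
    have hsub : F.image (fun A => A ∩ I) ⊆ I.powerset := by
      intro x hx
      obtain ⟨A, -, rfl⟩ := mem_image.1 hx
      exact mem_powerset.2 inter_subset_right
    rw [Subset.antisymm hsub h1, card_powerset]

lemma not_myshatters {n : ℕ} (F : Finset (Finset (Fin n))) (B : Finset (Fin n))
    (h : ∀ A ∈ F, ¬ B ⊆ A) : ¬ _root_.Shatters F B := by
  intro hs
  unfold _root_.Shatters at hs
  have hsub2 : F.image (fun A => A ∩ B) ⊆ B.powerset.erase B := by
    intro x hx
    obtain ⟨A, hA, rfl⟩ := mem_image.1 hx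
    rw [mem_erase, mem_powerset]
    exact ⟨fun hEq => h A hA (inter_eq_right.1 hEq), inter_subset_right⟩
  have hle := card_le_card hsub2
  rw [hs, card_erase_of_mem (mem_powerset.2 (Subset.refl _)), card_powerset] at hle
  have h1 : (1:ℕ) ≤ 2 ^ B.card := Nat.one_le_two_pow
  omega

/-- the block construction -/
lemma lower_bound (n r d : ℕ) (hd : 2 ≤ d) (hdr : d ≤ r) (hrn : r ≤ n)
    (hkd : (n - r) * d ≤ n) :
    ∃ F : Finset (Finset (Fin n)), ¬ HasU F (r + 1) d ∧
      F.card = 2 ^ (n - (n - r) * d) * (2 ^ d - 1) ^ (n - r) := by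
  set k := n - r with hk
  have hd0 : 0 < d := by omega
  have hn0 : 0 < n := by omega
  set blk : ℕ → Finset (Fin n) := fun i => univ.filter (fun x : Fin n => x.val / d = i)
    with hblk
  have hblkmem : ∀ (i : ℕ) (x : Fin n), x ∈ blk i ↔ x.val / d = i := by
    intro i x
    rw [hblk]
    simp
  have hblkcard : ∀ i, i < k → (blk i).card = d := by
    intro i hi
    have hib : (i + 1) * d ≤ n := le_trans (Nat.mul_le_mul_right d (by omega)) hkd
    rw [← card_range d]
    refine card_bij' (fun x _ => x.val - i * d) (fun m hm => ⟨i * d + m, ?_⟩) ?_ ?_ ?_ ?_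
    · have hm' : m < d := mem_range.1 hm
      have h2 : i * d + d = (i + 1) * d := by ring
      omega
    · intro x hx
      have hxd : x.val / d = i := (hblkmem i x).1 hx
      have hxe : (x.val) = i * d + x.val % d := by
        conv_lhs => rw [← Nat.div_add_mod x.val d]
        rw [hxd, mul_comm]
      have hmod : x.val % d < d := Nat.mod_lt _ hd0
      refine mem_range.2 ?_
      show x.val - i * d < d
      omega
    · intro m hm
      have hm' : m < d := mem_range.1 hm
      rw [hblkmem]
      simp only []
      rw [add_comm, Nat.add_mul_div_right _ _ hd0, Nat.div_eq_of_lt hm']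
      omega
    · intro x hx
      have hxd : x.val / d = i := (hblkmem i x).1 hx
      have hxe : (x.val) = i * d + x.val % d := by
        conv_lhs => rw [← Nat.div_add_mod x.val d]
        rw [hxd, mul_comm]
      apply Fin.ext
      simp only []
      omega
    · intro m hm
      simp only []
      omega
  have hblkdisj : ∀ i j, i ≠ j → Disjoint (blk i) (blk j) := by
    intro i j hij
    rw [disjoint_left]
    intro x hxi hxj
    rw [hblkmem] at hxi hxj
    omega
  have hcount := count_blocks d k (univ : Finset (Fin n)) blk
    (fun i hi => ⟨subset_univ _, hblkcard i hi⟩)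
    (fun i j _ _ hij => hblkdisj i j hij)
  rw [card_univ, Fintype.card_fin] at hcount
  refine ⟨_, ?_, hcount.2⟩
  rintro ⟨I, hIcard, hId, hIuniv⟩
  have hIle : I.card ≤ n := by
    have := card_le_card (subset_univ I)
    rwa [card_univ, Fintype.card_fin] at this
  have hk1 : 1 ≤ k := by omega
  -- find a block inside I
  have hexblk : ∃ i, i < k ∧ blk i ⊆ I := by
    by_contra hno
    push_neg at hno
    have hex : ∀ i ∈ range k, ((blk i) \ I).Nonempty := by
      intro i hi
      obtain ⟨x, hx1, hx2⟩ := not_subset.1 (hno i (mem_range.1 hi))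
      exact ⟨x, mem_sdiff.2 ⟨hx1, hx2⟩⟩
    set g : ℕ → Fin n := fun i =>
      if h : ((blk i) \ I).Nonempty then h.choose else ⟨0, hn0⟩ with hg
    have hgmem : ∀ i ∈ range k, g i ∈ (blk i) \ I := by
      intro i hi
      rw [hg]
      simp only [dif_pos (hex i hi)]
      exact (hex i hi).choose_spec
    have hcard := card_le_card_of_injOn g
      (fun i hi => mem_sdiff.2 ⟨mem_univ _, (mem_sdiff.1 (hgmem i hi)).2⟩) ?inj
    case inj =>
      intro i hi j hj hgij
      by_contra hij
      have h1 : g i ∈ blk i := (mem_sdiff.1 (hgmem i hi)).1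
      have h2 : g j ∈ blk j := (mem_sdiff.1 (hgmem j hj)).1
      rw [hgij] at h1
      exact (disjoint_left.1 (hblkdisj i j hij) h1) h2
    rw [card_range, card_sdiff_of_subset (subset_univ I), card_univ, Fintype.card_fin, hIcard] at hcard
    omega
  obtain ⟨i, hik, hisub⟩ := hexblk
  have hshat := hIuniv (blk i) hisub (hblkcard i hik)
  refine not_myshatters _ (blk i) ?_ hshat
  intro A hA
  exact (mem_filter.1 hA).2 i hik

lemma upper_bound (n r d : ℕ) (hd : 2 ≤ d) (hdr : d ≤ r) (hrn : r ≤ n)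
    (hkd : (n - r) * d ≤ n) (F : Finset (Finset (Fin n))) (hF : ¬ HasU F (r + 1) d) :
    F.card ≤ 2 ^ (n - (n - r) * d) * (2 ^ d - 1) ^ (n - r) := by
  set k := n - r with hk
  obtain ⟨G, hGcard, hGsh, hGer⟩ :=
    exists_compressed (∑ A ∈ F, A.card) F (le_refl _)
  have hdc : ∀ A ∈ G, ∀ B ⊆ A, B ∈ G :=
    fun A hA B hB => downward_closed G hGer A.card A hA (le_refl _) B hB
  have hGU : ¬ HasU G (r + 1) d := by
    rintro ⟨I, hI1, hI2, hI3⟩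
    refine hF ⟨I, hI1, hI2, fun J hJ hJc => ?_⟩
    rw [myShatters_iff]
    exact hGsh J ((myShatters_iff G J).1 (hI3 J hJ hJc))
  set N : Finset (Finset (Fin n)) :=
    univ.powerset.filter (fun f => f.card = d ∧ f ∉ G) with hN
  have hNmem : ∀ f, f ∈ N ↔ f.card = d ∧ f ∉ G := by
    intro f
    rw [hN, mem_filter, mem_powerset]
    exact ⟨fun h => h.2, fun h => ⟨subset_univ _, h⟩⟩
  have hNsub : ∀ f ∈ N, f ⊆ (univ : Finset (Fin n)) ∧ f.card ≤ d := by
    intro f hf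
    exact ⟨subset_univ _, le_of_eq ((hNmem f).1 hf).1⟩
  have hNτ : ∀ C : Finset (Fin n), C.card < k → ∃ f ∈ N, f ∩ C = ∅ := by
    intro C hC
    have hcompl : r + 1 ≤ ((univ : Finset (Fin n)) \ C).card := by
      rw [card_sdiff_of_subset (subset_univ C), card_univ, Fintype.card_fin]
      omega
    obtain ⟨I, hIsub, hIcard⟩ := exists_subset_card_eq hcompl
    have hnd : ¬ DUniversal G d I := by
      intro hDU
      exact hGU ⟨I, hIcard, hDU⟩
    rw [DUniversal] at hnd
    push_neg at hnd
    obtain ⟨J, hJI, hJcard, hJnsh⟩ := hnd (by omega)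
    have hJG : J ∉ G := by
      intro hJG
      refine hJnsh ((myShatters_iff G J).2 ?_)
      exact shatters_of_forall_subset (fun t ht => hdc J hJG t ht)
    refine ⟨J, (hNmem J).2 ⟨hJcard, hJG⟩, ?_⟩
    rw [← disjoint_iff_inter_eq_empty]
    exact disjoint_right.2 fun x hxC hxJ => (mem_sdiff.1 (hIsub (hJI hxJ))).2 hxC
  have hGmem : ∀ S ∈ G, S ⊆ (univ : Finset (Fin n)) ∧ ∀ f ∈ N, ¬ f ⊆ S := by
    intro S hS
    refine ⟨subset_univ _, fun f hf hfS => ?_⟩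
    exact ((hNmem f).1 hf).2 (hdc S hS f hfS)
  have hmain := main_count d k (univ : Finset (Fin n)) N G hNsub hNτ hGmem
  rw [card_univ, Fintype.card_fin] at hmain
  have step1 : F.card * 2 ^ (k * d) ≤ 2 ^ n * (2 ^ d - 1) ^ k := by
    rw [← hGcard]
    exact hmain
  have step2 : (2:ℕ) ^ n * (2 ^ d - 1) ^ k
      = 2 ^ (n - k * d) * (2 ^ d - 1) ^ k * 2 ^ (k * d) := by
    rw [mul_comm ((2:ℕ) ^ (n - k * d)) _, mul_assoc, ← pow_add]
    have hnk : n - k * d + k * d = n := by omega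
    rw [hnk, mul_comm]
  rw [step2] at step1
  exact Nat.le_of_mul_le_mul_right step1 (by positivity)

end UAux

theorem stmt_5 (n r d : ℕ) (hd : 2 ≤ d) (hdr : d ≤ r) (hrn : r ≤ n)
    (hlarge : (d - 1) * n ≤ d * r) :
    uMax n r d = 2 ^ (n - (n - r) * d) * (2 ^ d - 1) ^ (n - r) := by
  have h1 : 1 ≤ d := by omega
  have e1 : (d - 1) * n + n = d * n := by
    calc (d - 1) * n + n = (d - 1 + 1) * n := by ring
      _ = d * n := by rw [Nat.sub_add_cancel h1]
  have e2 : d * (n - r) + d * r = d * n := by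
    rw [← Nat.mul_add, Nat.sub_add_cancel hrn]
  have e3 : (n - r) * d = d * (n - r) := by ring
  have hkd : (n - r) * d ≤ n := by omega
  obtain ⟨F₀, hF₀U, hF₀card⟩ := UAux.lower_bound n r d hd hdr hrn hkd
  have hbdd : BddAbove {m | ∃ F : Finset (Finset (Fin n)), ¬ HasU F (r + 1) d ∧ F.card = m} := by
    refine ⟨Fintype.card (Finset (Fin n)), ?_⟩
    rintro m ⟨F, -, rfl⟩
    exact Finset.card_le_univ F
  have hmem : 2 ^ (n - (n - r) * d) * (2 ^ d - 1) ^ (n - r)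
      ∈ {m | ∃ F : Finset (Finset (Fin n)), ¬ HasU F (r + 1) d ∧ F.card = m} :=
    ⟨F₀, hF₀U, hF₀card⟩
  refine le_antisymm ?_ ?_
  · refine csSup_le ⟨_, hmem⟩ ?_
    rintro m ⟨F, hF, rfl⟩
    exact UAux.upper_bound n r d hd hdr hrn hkd F hF
  · exact le_csSup hbdd hmem
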